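/- Let $X_1, \dots, X_N$ be independent Bernoulli random variables, each with success probability $p \in (0,1)$, let $D \subseteq \{1,\dots,N\}$ with $|D| = 3 + \lfloor 3\log(pN)/(-\log(1-p)) \rfloor$, and let $d = \sum_{i \in D} X_i$ and $|S| = \sum_{i=1}^N X_i$. If $pN > 1$, then $\Pr[d \le 2] \cdot \mathbb{E}[|S| \mid d \le 2] \le 9$. -/

import Mathlib

open MeasureTheory ProbabilityTheory

section Aux
variable {Ω : Type*} [MeasurableSpace Ω]

lemma aux_zero_prob {N : ℕ} (μ : Measure Ω) [IsProbabilityMeasure μ]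
    (p : ℝ) (X : Fin N → Ω → ℕ) (hmeas : ∀ i, Measurable (X i))
    (hber : ∀ i ω, X i ω = 0 ∨ X i ω = 1)
    (hprob : ∀ i, μ {ω | X i ω = 1} = ENNReal.ofReal p) (hp : 0 ≤ p) (a : Fin N) :
    μ {ω | X a ω = 0} = ENNReal.ofReal (1 - p) := by
  have h1 : {ω | X a ω = 0} = {ω | X a ω = 1}ᶜ := by
    ext ω
    rcases hber a ω with h | h <;> simp [h]
  have hm : MeasurableSet {ω | X a ω = 1} := hmeas a (measurableSet_singleton 1)
  rw [h1, prob_compl_eq_one_sub hm, hprob a, ← ENNReal.ofReal_one, ← ENNReal.ofReal_sub _ hp]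

lemma aux_binom {N : ℕ} (μ : Measure Ω) [IsProbabilityMeasure μ]
    (p : ℝ) (hp : 0 ≤ p)
    (X : Fin N → Ω → ℕ) (hmeas : ∀ i, Measurable (X i))
    (hber : ∀ i ω, X i ω = 0 ∨ X i ω = 1)
    (hprob : ∀ i, μ {ω | X i ω = 1} = ENNReal.ofReal p)
    (hindep : iIndepFun X μ) (A : Finset (Fin N)) :
    ∀ j : ℕ, μ {ω | ∑ i ∈ A, X i ω = j}
      = (A.card.choose j : ENNReal) * ENNReal.ofReal p ^ j
        * ENNReal.ofReal (1 - p) ^ (A.card - j) := by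
  classical
  induction A using Finset.induction_on with
  | empty =>
    intro j
    cases j with
    | zero => simp
    | succ k => simp
  | @insert a s ha ih =>
    intro j
    have hms : Measurable (fun ω => ∑ i ∈ s, X i ω) :=
      Finset.measurable_sum s fun i _ => hmeas i
    have hindepAS : IndepFun (∑ i ∈ s, X i) (X a) μ :=
      hindep.indepFun_finsetSum_of_notMem hmeas ha
    have hsum : (∑ i ∈ s, X i) = fun ω => ∑ i ∈ s, X i ω := by
      ext ω; simp
    have key : ∀ (u v : ℕ), μ ({ω | X a ω = u} ∩ {ω | ∑ i ∈ s, X i ω = v})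
        = μ {ω | X a ω = u} * μ {ω | ∑ i ∈ s, X i ω = v} := by
      intro u v
      have := hindepAS.measure_inter_preimage_eq_mul {v} {u}
        (measurableSet_singleton v) (measurableSet_singleton u)
      rw [hsum] at this
      have e1 : ((fun ω => ∑ i ∈ s, X i ω) ⁻¹' {v}) = {ω | ∑ i ∈ s, X i ω = v} := rfl
      have e2 : (X a ⁻¹' {u}) = {ω | X a ω = u} := rfl
      rw [e1, e2] at this
      rw [Set.inter_comm, this, mul_comm]
    have hcard : (insert a s).card = s.card + 1 := Finset.card_insert_of_notMem ha
    have hq := aux_zero_prob μ p X hmeas hber hprob hp a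
    cases j with
    | zero =>
      have hset : {ω | ∑ i ∈ insert a s, X i ω = 0}
          = {ω | X a ω = 0} ∩ {ω | ∑ i ∈ s, X i ω = 0} := by
        ext ω
        simp [Finset.sum_insert ha, Nat.add_eq_zero]
      rw [hset, key 0 0, hq, ih 0, hcard]
      simp [pow_succ]
      ring
    | succ k =>
      have hset : {ω | ∑ i ∈ insert a s, X i ω = k + 1}
          = ({ω | X a ω = 0} ∩ {ω | ∑ i ∈ s, X i ω = k + 1})
            ∪ ({ω | X a ω = 1} ∩ {ω | ∑ i ∈ s, X i ω = k}) := by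
        ext ω
        simp only [Set.mem_setOf_eq, Set.mem_union, Set.mem_inter_iff, Finset.sum_insert ha]
        rcases hber a ω with h | h <;> simp [h] <;> omega
      have hdisj : Disjoint ({ω | X a ω = 0} ∩ {ω | ∑ i ∈ s, X i ω = k + 1})
          ({ω | X a ω = 1} ∩ {ω | ∑ i ∈ s, X i ω = k}) := by
        apply Set.disjoint_left.mpr
        rintro ω ⟨h0, -⟩ ⟨h1, -⟩
        simp only [Set.mem_setOf_eq] at h0 h1
        omega
      have hm2 : MeasurableSet ({ω | X a ω = 1} ∩ {ω | ∑ i ∈ s, X i ω = k}) :=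
        (hmeas a (measurableSet_singleton 1)).inter (hms (measurableSet_singleton k))
      rw [hset, measure_union hdisj hm2, key 0 (k+1), key 1 k, hq, hprob a, ih (k+1), ih k,
        hcard]
      rw [Nat.succ_sub_succ]
      rcases le_or_gt (k + 1) s.card with hle | hlt
      · have e1 : s.card - (k + 1) + 1 = s.card - k := by omega
        rw [Nat.choose_succ_succ']
        push_cast
        rw [← e1]
        ring
      · have c1 : s.card.choose (k + 1) = 0 := Nat.choose_eq_zero_of_lt hlt
        have c2 : (s.card + 1).choose (k + 1) = s.card.choose k := by
          rw [Nat.choose_succ_succ', c1, add_zero]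
        rw [c1, c2]
        push_cast
        ring

end Aux

set_option maxHeartbeats 1000000 in
theorem stochastic_few_enforcers_bound
    {Ω : Type*} [MeasurableSpace Ω] (μ : Measure Ω) [IsProbabilityMeasure μ]
    (N : ℕ) (p : ℝ) (hp : 0 < p) (hp1 : p < 1)
    (X : Fin N → Ω → ℕ)
    (hmeas : ∀ i, Measurable (X i))
    (hber : ∀ i ω, X i ω = 0 ∨ X i ω = 1)
    (hprob : ∀ i, μ {ω | X i ω = 1} = ENNReal.ofReal p)
    (hindep : iIndepFun X μ)
    (D : Finset (Fin N))
    (hD : D.card = 3 + ⌊3 * Real.log (p * N) / (-Real.log (1 - p))⌋₊)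
    (hpN : 1 < p * N) :
    ∫ ω in {ω | ∑ i ∈ D, X i ω ≤ 2}, ((∑ i, X i ω : ℕ) : ℝ) ∂μ ≤ 9 := by
  classical
  set q : ℝ := 1 - p with hqdef
  have hp0 : (0:ℝ) ≤ p := hp.le
  have hq0 : 0 < q := by simp only [hqdef]; linarith
  have hq1 : q < 1 := by simp only [hqdef]; linarith
  set y : ℝ := p * N with hydef
  have hy0 : 0 < y := lt_trans one_pos hpN
  have hy1 : (1:ℝ) ≤ y := hpN.le
  set k : ℕ := ⌊3 * Real.log (p * N) / (-Real.log (1 - p))⌋₊ with hkdef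
  set m : ℕ := D.card with hmdef
  set E : Set Ω := {ω | ∑ i ∈ D, X i ω ≤ 2} with hEdef
  have hmd : Measurable (fun ω => ∑ i ∈ D, X i ω) :=
    Finset.measurable_sum D fun i _ => hmeas i
  have hEmeas : MeasurableSet E := by
    have : E = (fun ω => ∑ i ∈ D, X i ω) ⁻¹' (Set.Iic 2) := rfl
    rw [this]
    exact hmd (Set.finite_Iic 2).measurableSet
  set P : ℝ := (μ E).toReal with hPdef
  have hP0 : 0 ≤ P := ENNReal.toReal_nonneg
  -- exact probabilities
  have hbin := aux_binom μ p hp0 X hmeas hber hprob hindep D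
  have hr : ∀ j : ℕ, (μ {ω | ∑ i ∈ D, X i ω = j}).toReal
      = (m.choose j : ℝ) * p ^ j * q ^ (m - j) := by
    intro j
    rw [hbin j]
    rw [ENNReal.toReal_mul, ENNReal.toReal_mul, ENNReal.toReal_pow, ENNReal.toReal_pow,
      ENNReal.toReal_natCast, ENNReal.toReal_ofReal hp0, ENNReal.toReal_ofReal (by linarith)]
  -- P ≤ r0 + r1 + r2
  have hEsub : E = {ω | ∑ i ∈ D, X i ω = 0} ∪ ({ω | ∑ i ∈ D, X i ω = 1}
      ∪ {ω | ∑ i ∈ D, X i ω = 2}) := by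
    ext ω
    simp only [hEdef, Set.mem_setOf_eq, Set.mem_union]
    omega
  have hPle : P ≤ (μ {ω | ∑ i ∈ D, X i ω = 0}).toReal
      + (μ {ω | ∑ i ∈ D, X i ω = 1}).toReal + (μ {ω | ∑ i ∈ D, X i ω = 2}).toReal := by
    have h1 : μ E ≤ μ {ω | ∑ i ∈ D, X i ω = 0} + (μ {ω | ∑ i ∈ D, X i ω = 1}
        + μ {ω | ∑ i ∈ D, X i ω = 2}) := by
      rw [hEsub]
      exact le_trans (measure_union_le _ _) (add_le_add_right (measure_union_le _ _) _)
    have h2 := ENNReal.toReal_mono (by finiteness) h1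
    rw [ENNReal.toReal_add (by finiteness) (by finiteness),
      ENNReal.toReal_add (by finiteness) (by finiteness)] at h2
    linarith
  -- basic size facts
  have hm3 : m = 3 + k := hD
  have hmN : (m : ℝ) ≤ N := by
    have : m ≤ N := le_trans (Finset.card_le_univ D) (by simp)
    exact_mod_cast this
  have hmp : (m : ℝ) * p ≤ y := by
    rw [hydef]
    nlinarith
  -- q^(k+1) ≤ (y^3)⁻¹
  have hx : 3 * Real.log y / (-Real.log q) < k + 1 := by
    have := Nat.lt_floor_add_one (3 * Real.log (p * N) / (-Real.log (1 - p)))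
    rw [← hkdef] at this
    exact_mod_cast this
  have hqk : q ^ (k+1) ≤ (y^3)⁻¹ := by
    have hlq : Real.log q < 0 := Real.log_neg hq0 hq1
    have hlq' : 0 < -Real.log q := by linarith
    have h1 : 3 * Real.log y < (k+1) * (-Real.log q) := by
      rwa [div_lt_iff₀ hlq'] at hx
    have h2 : ((k:ℝ)+1) * Real.log q < -(3 * Real.log y) := by nlinarith
    have h3 : q ^ (k+1) = Real.exp (((k:ℝ)+1) * Real.log q) := by
      rw [show ((k:ℝ)+1) * Real.log q = Real.log (q^(k+1)) by rw [Real.log_pow]; push_cast; ring]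
      exact (Real.exp_log (by positivity)).symm
    have h4 : (y^3)⁻¹ = Real.exp (-(3 * Real.log y)) := by
      rw [Real.exp_neg]
      congr 1
      rw [show (3:ℝ) * Real.log y = Real.log (y^3) by rw [Real.log_pow]; push_cast; ring]
      exact (Real.exp_log (by positivity)).symm
    rw [h3, h4]
    exact (Real.exp_lt_exp.mpr h2).le
  set Q : ℝ := q ^ (k+1) with hQdef
  have hQ0 : 0 < Q := by positivity
  have hy2 : (1:ℝ) ≤ y^2 := by nlinarith
  have hchoose2 : ((m.choose 2 : ℕ) : ℝ) ≤ (m:ℝ)^2 := by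
    have h1 : m.choose 2 ≤ m * m := by
      rw [Nat.choose_two_right]
      exact le_trans (Nat.div_le_self _ _) (Nat.mul_le_mul_left m (Nat.sub_le m 1))
    calc ((m.choose 2 : ℕ):ℝ) ≤ ((m * m : ℕ):ℝ) := by exact_mod_cast h1
      _ = (m:ℝ)^2 := by push_cast; ring
  -- bound the three-term sum
  have hsum3 : (μ {ω | ∑ i ∈ D, X i ω = 0}).toReal
      + (μ {ω | ∑ i ∈ D, X i ω = 1}).toReal + (μ {ω | ∑ i ∈ D, X i ω = 2}).toReal
      ≤ 3 * y^2 * Q := by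
    rw [hr 0, hr 1, hr 2]
    rw [show m - 0 = (k+1) + 2 by omega, show m - 1 = (k+1) + 1 by omega,
      show m - 2 = k + 1 by omega]
    rw [Nat.choose_zero_right, Nat.choose_one_right]
    rw [pow_add q (k+1) 2, pow_add q (k+1) 1, ← hQdef]
    have hyy : y ≤ y^2 := by nlinarith
    have t0 : Q * q^2 ≤ y^2 * Q := by
      calc Q * q^2 ≤ Q * 1 := mul_le_mul_of_nonneg_left (by nlinarith) hQ0.le
        _ = 1 * Q := by ring
        _ ≤ y^2 * Q := mul_le_mul_of_nonneg_right hy2 hQ0.le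
    have hQq : Q * q ≤ Q := by nlinarith
    have hQq0 : (0:ℝ) ≤ Q * q := by positivity
    have hyy2 : (0:ℝ) ≤ y^2 := by positivity
    have t1 : (m:ℝ) * p^1 * (Q * q^1) ≤ y^2 * Q := by
      calc (m:ℝ) * p^1 * (Q * q^1) = ((m:ℝ) * p) * (Q * q) := by ring
        _ ≤ y^2 * Q := mul_le_mul (hmp.trans hyy) hQq hQq0 hyy2
    have t2 : ((m.choose 2 : ℕ):ℝ) * p^2 * Q ≤ y^2 * Q := by
      have h1 : ((m.choose 2 : ℕ):ℝ) * p^2 ≤ y^2 := by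
        nlinarith [mul_le_mul_of_nonneg_right hchoose2 (sq_nonneg p),
          mul_self_le_mul_self (by positivity : (0:ℝ) ≤ (m:ℝ) * p) hmp]
      exact mul_le_mul_of_nonneg_right h1 hQ0.le
    push_cast
    nlinarith [t0, t1, t2]
  have hP3 : P ≤ 3 / y := by
    have h1 : P ≤ 3 * y^2 * Q := le_trans hPle hsum3
    have h2 : 3 * y^2 * Q ≤ 3 * y^2 * (y^3)⁻¹ :=
      mul_le_mul_of_nonneg_left hqk (by positivity)
    have h3 : 3 * y^2 * (y^3)⁻¹ = 3 / y := by
      field_simp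
    linarith
  -- per-variable integrals
  have hXint : ∀ i : Fin N, Integrable (fun ω => (X i ω : ℝ)) μ ∧ ∫ ω, (X i ω : ℝ) ∂μ = p := by
    intro i
    have heq : (fun ω => (X i ω : ℝ)) = Set.indicator {ω | X i ω = 1} (fun _ => (1:ℝ)) := by
      ext ω
      rcases hber i ω with h | h <;> simp [Set.indicator_apply, h]
    have hm : MeasurableSet {ω | X i ω = 1} := hmeas i (measurableSet_singleton 1)
    constructor
    · rw [heq]; exact (integrable_const 1).indicator hm
    · rw [heq, integral_indicator_const _ hm, measureReal_def, hprob i, smul_eq_mul, mul_one,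
        ENNReal.toReal_ofReal hp0]
  have hsumint : ∀ A : Finset (Fin N),
      Integrable (fun ω => ((∑ i ∈ A, X i ω : ℕ) : ℝ)) μ := by
    intro A
    have h1 : (fun ω => ((∑ i ∈ A, X i ω : ℕ) : ℝ)) = fun ω => ∑ i ∈ A, (X i ω : ℝ) := by
      funext ω; push_cast; ring
    rw [h1]
    exact integrable_finset_sum A fun i _ => (hXint i).1
  have hTval : ∫ ω, ((∑ i ∈ Dᶜ, X i ω : ℕ) : ℝ) ∂μ = (Dᶜ.card : ℝ) * p := by
    have h1 : (fun ω => ((∑ i ∈ Dᶜ, X i ω : ℕ) : ℝ)) = fun ω => ∑ i ∈ Dᶜ, (X i ω : ℝ) := by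
      funext ω; push_cast; ring
    rw [h1, integral_finset_sum Dᶜ fun i _ => (hXint i).1,
      Finset.sum_congr rfl fun i _ => (hXint i).2]
    simp [Finset.sum_const, nsmul_eq_mul]
  -- independence of the two sums
  have hindsum : IndepFun (fun ω => ∑ i ∈ Dᶜ, X i ω) (fun ω => ∑ i ∈ D, X i ω) μ := by
    have h := hindep.indepFun_finset Dᶜ D disjoint_compl_left hmeas
    have hφ : ∀ (S : Finset (Fin N)), Measurable (fun v : (i : S) → ℕ => ∑ i, v i) := by
      intro S
      exact Finset.measurable_sum Finset.univ fun i _ => measurable_pi_apply i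
    have h2 := h.comp (hφ Dᶜ) (hφ D)
    have e : ∀ (S : Finset (Fin N)),
        ((fun v : (i : S) → ℕ => ∑ i, v i) ∘ fun a (i : S) => X i a)
          = fun a => ∑ i ∈ S, X i a := by
      intro S
      funext a
      simp only [Function.comp_apply]
      exact Finset.sum_coe_sort S (fun i => X i a)
    rwa [e, e] at h2
  set ψ : ℕ → ℝ := Set.indicator {n : ℕ | n ≤ 2} (fun _ => (1:ℝ)) with hψdef
  have hcomp : IndepFun (fun ω => ((∑ i ∈ Dᶜ, X i ω : ℕ) : ℝ))
      (fun ω => ψ (∑ i ∈ D, X i ω)) μ :=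
    hindsum.comp (measurable_from_top (f := fun n : ℕ => (n:ℝ)))
      (measurable_from_top (f := ψ))
  have hψind : (fun ω => ψ (∑ i ∈ D, X i ω)) = E.indicator (fun _ => (1:ℝ)) := by
    funext ω
    by_cases h : ∑ i ∈ D, X i ω ≤ 2 <;>
      simp [hψdef, Set.indicator_apply, h, hEdef, Set.mem_setOf_eq]
  have hψint : Integrable (fun ω => ψ (∑ i ∈ D, X i ω)) μ := by
    rw [hψind]; exact (integrable_const 1).indicator hEmeas
  have hψval : ∫ ω, ψ (∑ i ∈ D, X i ω) ∂μ = P := by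
    rw [hψind, integral_indicator_const _ hEmeas, smul_eq_mul, mul_one, measureReal_def]
  -- set integral of the complement part
  have hsetT : ∫ ω in E, ((∑ i ∈ Dᶜ, X i ω : ℕ) : ℝ) ∂μ = ((Dᶜ.card : ℝ) * p) * P := by
    rw [← integral_indicator hEmeas]
    have h1 : E.indicator (fun ω => ((∑ i ∈ Dᶜ, X i ω : ℕ) : ℝ))
        = (fun ω => ((∑ i ∈ Dᶜ, X i ω : ℕ) : ℝ)) * (fun ω => ψ (∑ i ∈ D, X i ω)) := by
      funext ω
      by_cases h : ∑ i ∈ D, X i ω ≤ 2 <;>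
        simp [hψdef, Set.indicator_apply, h, hEdef, Set.mem_setOf_eq]
    rw [h1, hcomp.integral_mul_eq_mul_integral (hsumint Dᶜ).aestronglyMeasurable hψint.aestronglyMeasurable, hTval, hψval]
  -- set integral of the D part
  have hsetD : ∫ ω in E, ((∑ i ∈ D, X i ω : ℕ) : ℝ) ∂μ ≤ 2 * P := by
    have h1 : ∫ ω in E, ((∑ i ∈ D, X i ω : ℕ) : ℝ) ∂μ ≤ ∫ _ in E, (2:ℝ) ∂μ := by
      apply setIntegral_mono_on ((hsumint D).integrableOn) (integrableOn_const (measure_ne_top μ E)) hEmeas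
      intro ω hω
      have : (∑ i ∈ D, X i ω) ≤ 2 := hω
      exact_mod_cast this
    rw [setIntegral_const] at h1
    rw [smul_eq_mul] at h1
    linarith [h1, measureReal_def μ E, hPdef]
  -- splitting
  have hsplit : ∫ ω in E, ((∑ i, X i ω : ℕ) : ℝ) ∂μ
      = (∫ ω in E, ((∑ i ∈ D, X i ω : ℕ) : ℝ) ∂μ)
        + ∫ ω in E, ((∑ i ∈ Dᶜ, X i ω : ℕ) : ℝ) ∂μ := by
    have h1 : (fun ω => ((∑ i, X i ω : ℕ) : ℝ))
        = fun ω => ((∑ i ∈ D, X i ω : ℕ) : ℝ) + ((∑ i ∈ Dᶜ, X i ω : ℕ) : ℝ) := by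
      funext ω
      rw [← Finset.sum_add_sum_compl D (fun i => X i ω)]
      push_cast
      ring
    rw [h1]
    exact integral_add ((hsumint D).integrableOn) ((hsumint Dᶜ).integrableOn)
  -- final assembly
  rw [hsplit, hsetT]
  have hcp : ((Dᶜ.card : ℕ) : ℝ) * p ≤ y := by
    have h1 : (Dᶜ.card : ℕ) ≤ N := le_trans (Finset.card_le_univ _) (by simp)
    have h2 : ((Dᶜ.card : ℕ) : ℝ) ≤ N := by exact_mod_cast h1
    rw [hydef]
    nlinarith
  have hPy : P * y ≤ 3 := (le_div_iff₀ hy0).mp hP3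
  have hcpP : ((Dᶜ.card : ℕ) : ℝ) * p * P ≤ y * P := mul_le_mul_of_nonneg_right hcp hP0
  have hyP : y * P ≤ 3 := by rw [mul_comm]; exact hPy
  have hPle3 : P ≤ 3 := by nlinarith [mul_le_mul_of_nonneg_left hy1 hP0]
  linarith [hsetD, hcpP, hyP, hPle3]
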